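/- Let a < b be real numbers and let u be three times continuously differentiable on [a,b]. Then for every x in [a,b], |u(x) − u_I(x) − (1/2)(x−a)(x−b)·u''(x)| ≤ ((b−a)^3/8) · sup_{t∈[a,b]} |u'''(t)|, where u_I is the linear interpolant of u on [a,b]. -/

import Mathlib

open Set

/-- One integration step: if `|f'| ≤ C (t-c)^k` on `[c,d]`, then
`|f x - f c| ≤ C (x-c)^(k+1)/(k+1)`. -/
lemma step_bound {c d C : ℝ} {k : ℕ} (f f' : ℝ → ℝ)
    (hf : ∀ t ∈ Set.Icc c d, HasDerivWithinAt f (f' t) (Set.Icc c d) t)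
    (hb : ∀ t ∈ Set.Icc c d, |f' t| ≤ C * (t - c) ^ k) :
    ∀ x ∈ Set.Icc c d, |f x - f c| ≤ C * (x - c) ^ (k + 1) / (k + 1) := by
  intro x hx
  have hg : ContinuousOn (fun t => f t - f c) (Set.Icc c d) :=
    fun t ht => ((hf t ht).continuousWithinAt.sub continuousWithinAt_const)
  have hg' : ∀ t ∈ Set.Ico c d,
      HasDerivWithinAt (fun t => f t - f c) (f' t) (Set.Ici t) t := by
    intro t ht
    exact ((hf t (Ico_subset_Icc_self ht)).sub_const (f c)).mono_of_mem_nhdsWithin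
      (Icc_mem_nhdsGE_of_mem ht)
  have hB : ∀ t : ℝ, HasDerivAt (fun t => C * (t - c) ^ (k + 1) / (k + 1))
      (C * (t - c) ^ k) t := by
    intro t
    have h1 : HasDerivAt (fun t : ℝ => (t - c) ^ (k + 1))
        ((k + 1 : ℕ) * (t - c) ^ k) t := by
      simpa [Pi.pow_def] using (((hasDerivAt_id t).sub_const c).pow (k + 1))
    have h2 := (h1.const_mul C).div_const ((k : ℝ) + 1)
    refine h2.congr_deriv ?_
    have : ((k : ℝ) + 1) ≠ 0 := by positivity
    field_simp
    push_cast
    ring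
  have key := image_norm_le_of_norm_deriv_right_le_deriv_boundary hg hg'
    (B := fun t => C * (t - c) ^ (k + 1) / (k + 1)) (B' := fun t => C * (t - c) ^ k)
    (by simp) hB (fun t ht => hb t (Ico_subset_Icc_self ht)) hx
  simpa using key

/-- Second-order Taylor bound at the left endpoint. -/
lemma taylor2_bound {c d M : ℝ} (u u' u'' u''' : ℝ → ℝ)
    (h1 : ∀ t ∈ Set.Icc c d, HasDerivWithinAt u (u' t) (Set.Icc c d) t)
    (h2 : ∀ t ∈ Set.Icc c d, HasDerivWithinAt u' (u'' t) (Set.Icc c d) t)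
    (h3 : ∀ t ∈ Set.Icc c d, HasDerivWithinAt u'' (u''' t) (Set.Icc c d) t)
    (hM : ∀ t ∈ Set.Icc c d, |u''' t| ≤ M) :
    ∀ x ∈ Set.Icc c d,
      |u x - u c - u' c * (x - c) - u'' c * (x - c) ^ 2 / 2| ≤ M * (x - c) ^ 3 / 6 := by
  have s1 : ∀ t ∈ Set.Icc c d, |u'' t - u'' c| ≤ M * (t - c) ^ 1 := by
    have h := step_bound (C := M) (k := 0) u'' u''' h3 (by intro t ht; simpa using hM t ht)
    intro t ht
    refine (h t ht).trans_eq ?_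
    push_cast
    ring
  have hf1 : ∀ t ∈ Set.Icc c d,
      HasDerivWithinAt (fun t => u' t - u'' c * (t - c)) (u'' t - u'' c) (Set.Icc c d) t := by
    intro t ht
    have := (h2 t ht).sub
      ((((hasDerivWithinAt_id t (Set.Icc c d)).sub_const c)).const_mul (u'' c))
    simpa [Pi.sub_def] using this
  have s2 : ∀ t ∈ Set.Icc c d,
      |(u' t - u'' c * (t - c)) - (u' c - u'' c * (c - c))| ≤ M / 2 * (t - c) ^ 2 := by
    have h := step_bound (C := M) (k := 1) _ _ hf1 s1
    intro t ht
    refine (h t ht).trans_eq ?_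
    push_cast
    ring
  have hf0 : ∀ t ∈ Set.Icc c d,
      HasDerivWithinAt (fun t => u t - u' c * (t - c) - u'' c * (t - c) ^ 2 / 2)
        ((u' t - u'' c * (t - c)) - (u' c - u'' c * (c - c))) (Set.Icc c d) t := by
    intro t ht
    have h0 : HasDerivWithinAt (fun s : ℝ => (s - c) ^ 2) (2 * (t - c)) (Set.Icc c d) t := by
      simpa [Pi.pow_def] using ((hasDerivWithinAt_id t (Set.Icc c d)).sub_const c).pow 2
    have hq := (h0.const_mul (u'' c)).div_const 2
    have hl : HasDerivWithinAt (fun s : ℝ => u' c * (s - c)) (u' c) (Set.Icc c d) t := by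
      simpa using ((hasDerivWithinAt_id t (Set.Icc c d)).sub_const c).const_mul (u' c)
    have := ((h1 t ht).sub hl).sub hq
    refine this.congr_deriv ?_
    ring
  have s3 := step_bound (C := M / 2) (k := 2) _ _ hf0 s2
  intro x hx
  have h4 := s3 x hx
  have e : (fun t => u t - u' c * (t - c) - u'' c * (t - c) ^ 2 / 2) x -
      (fun t => u t - u' c * (t - c) - u'' c * (t - c) ^ 2 / 2) c
      = u x - u c - u' c * (x - c) - u'' c * (x - c) ^ 2 / 2 := by
    simp only []
    ring
  rw [e] at h4
  refine h4.trans_eq ?_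
  push_cast
  ring

/-- Let `a < b` and let `u` be three times continuously differentiable on
`[a,b]` (with derivatives `u'`, `u''`, `u'''`).  Then for every `x ∈ [a,b]`,
`|u x − u_I x − (1/2)(x−a)(x−b) u'' x| ≤ ((b−a)³/8) · sup_{t∈[a,b]} |u''' t|`,
where `u_I` is the linear interpolant of `u` on `[a,b]`. -/
theorem linear_interp_third_order_expansion
    (a b : ℝ) (hab : a < b) (u u' u'' u''' : ℝ → ℝ)
    (hu' : ∀ x ∈ Set.Icc a b, HasDerivWithinAt u (u' x) (Set.Icc a b) x)
    (hu'' : ∀ x ∈ Set.Icc a b, HasDerivWithinAt u' (u'' x) (Set.Icc a b) x)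
    (hu''' : ∀ x ∈ Set.Icc a b, HasDerivWithinAt u'' (u''' x) (Set.Icc a b) x)
    (hcont : ContinuousOn u''' (Set.Icc a b)) :
    ∀ x ∈ Set.Icc a b,
      |u x - (u a * (b - x) / (b - a) + u b * (x - a) / (b - a))
          - 1 / 2 * (x - a) * (x - b) * u'' x|
        ≤ (b - a) ^ 3 / 8 * ⨆ t : Set.Icc a b, |u''' t| := by
  -- the sup
  obtain ⟨C, hC⟩ := IsCompact.exists_bound_of_continuousOn isCompact_Icc hcont
  set M : ℝ := ⨆ t : Set.Icc a b, |u''' t| with hMdef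
  have hbdd : BddAbove (Set.range fun t : Set.Icc a b => |u''' t|) := by
    refine ⟨C, ?_⟩
    rintro _ ⟨t, rfl⟩
    simpa using hC t t.2
  have hM : ∀ t ∈ Set.Icc a b, |u''' t| ≤ M := fun t ht =>
    le_ciSup hbdd (⟨t, ht⟩ : Set.Icc a b)
  have hM0 : 0 ≤ M :=
    le_trans (abs_nonneg _) (hM a ⟨le_rfl, le_of_lt hab⟩)
  intro x hx
  have hba : (0 : ℝ) < b - a := sub_pos.2 hab
  have hs : 0 ≤ x - a := sub_nonneg.2 hx.1
  have ht : 0 ≤ b - x := sub_nonneg.2 hx.2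
  -- Taylor on [x,b]
  have subR : Set.Icc x b ⊆ Set.Icc a b := Set.Icc_subset_Icc hx.1 le_rfl
  have hRb := taylor2_bound u u' u'' u'''
    (fun t htt => (hu' t (subR htt)).mono subR)
    (fun t htt => (hu'' t (subR htt)).mono subR)
    (fun t htt => (hu''' t (subR htt)).mono subR)
    (fun t htt => hM t (subR htt)) b ⟨hx.2, le_rfl⟩
  -- Taylor on [a,x] via reflection t ↦ a + x - t
  have subL : ∀ t ∈ Set.Icc a x, a + x - t ∈ Set.Icc a b := by
    intro t htt
    constructor
    · linarith [htt.2]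
    · linarith [htt.1, hx.2]
  have hgder : ∀ t : ℝ, HasDerivWithinAt (fun t : ℝ => a + x - t) (-1) (Set.Icc a x) t := by
    intro t
    simpa [Pi.sub_def] using ((hasDerivWithinAt_const t (Set.Icc a x) (a + x)).sub
      (hasDerivWithinAt_id t (Set.Icc a x)))
  have hmap : Set.MapsTo (fun t : ℝ => a + x - t) (Set.Icc a x) (Set.Icc a b) :=
    fun t htt => subL t htt
  have hv1 : ∀ t ∈ Set.Icc a x,
      HasDerivWithinAt (fun t => u (a + x - t)) (-u' (a + x - t)) (Set.Icc a x) t := by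
    intro t htt
    have := (hu' (a + x - t) (subL t htt)).comp t (hgder t) hmap
    simpa [Function.comp_def] using this
  have hv2 : ∀ t ∈ Set.Icc a x,
      HasDerivWithinAt (fun t => -u' (a + x - t)) (u'' (a + x - t)) (Set.Icc a x) t := by
    intro t htt
    have := ((hu'' (a + x - t) (subL t htt)).comp t (hgder t) hmap).neg
    have e : -(u'' (a + x - t) * -1) = u'' (a + x - t) := by ring
    rw [e] at this
    exact this
  have hv3 : ∀ t ∈ Set.Icc a x,
      HasDerivWithinAt (fun t => u'' (a + x - t)) (-u''' (a + x - t)) (Set.Icc a x) t := by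
    intro t htt
    have := (hu''' (a + x - t) (subL t htt)).comp t (hgder t) hmap
    have e : u''' (a + x - t) * -1 = -u''' (a + x - t) := by ring
    rw [e] at this
    simpa [Function.comp_def] using this
  have hRa' := taylor2_bound (fun t => u (a + x - t)) (fun t => -u' (a + x - t))
    (fun t => u'' (a + x - t)) (fun t => -u''' (a + x - t))
    hv1 hv2 hv3
    (by intro t htt; rw [abs_neg]; exact hM _ (subL t htt)) x ⟨hx.1, le_rfl⟩
  simp only [add_sub_cancel_right, add_sub_cancel_left] at hRa'
  -- hRa' : |u a - u x - (-u' x) * (x - a) - u'' x * (x - a)^2/2| ≤ M * (x-a)^3/6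
  set Ra : ℝ := u a - u x - (-u' x) * (x - a) - u'' x * (x - a) ^ 2 / 2 with hRadef
  set Rb : ℝ := u b - u x - u' x * (b - x) - u'' x * (b - x) ^ 2 / 2 with hRbdef
  have hE : u x - (u a * (b - x) / (b - a) + u b * (x - a) / (b - a))
      - 1 / 2 * (x - a) * (x - b) * u'' x
      = -(Ra * (b - x) + Rb * (x - a)) / (b - a) := by
    rw [hRadef, hRbdef]
    field_simp
    ring
  rw [hE, abs_div, abs_of_pos hba, div_le_iff₀ hba, abs_neg]
  have htri : |Ra * (b - x) + Rb * (x - a)| ≤ |Ra| * (b - x) + |Rb| * (x - a) := by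
    calc |Ra * (b - x) + Rb * (x - a)| ≤ |Ra * (b - x)| + |Rb * (x - a)| := abs_add_le _ _
      _ = |Ra| * (b - x) + |Rb| * (x - a) := by
          rw [abs_mul, abs_mul, abs_of_nonneg ht, abs_of_nonneg hs]
  have hRaB : |Ra| ≤ M * (x - a) ^ 3 / 6 := hRa'
  have hRbB : |Rb| ≤ M * (b - x) ^ 3 / 6 := hRb
  nlinarith [mul_le_mul_of_nonneg_right hRaB ht, mul_le_mul_of_nonneg_right hRbB hs,
    mul_nonneg hM0 (mul_nonneg (mul_nonneg (mul_nonneg hs hs) hs) hs),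
    mul_nonneg hM0 (mul_nonneg (mul_nonneg (mul_nonneg hs hs) hs) ht),
    mul_nonneg hM0 (mul_nonneg (mul_nonneg (mul_nonneg hs hs) ht) ht),
    mul_nonneg hM0 (mul_nonneg (mul_nonneg (mul_nonneg hs ht) ht) ht),
    mul_nonneg hM0 (mul_nonneg (mul_nonneg (mul_nonneg ht ht) ht) ht)]
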